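/- Let ω, C_{[1:r]}, X_1^n, X_2^n, Y_1^n, Y_2^n be finite random variables satisfying: ω independent of i.i.d. (X_1^n, X_2^n); C_i — ω C_{[1:i-1]} X_1^n — X_2^n for odd i; C_i — ω C_{[1:i-1]} X_2^n — X_1^n for even i; Y_1^n — ω C_{[1:r]} X_1^n — (X_2^n, Y_2^n); and Y_2^n — ω C_{[1:r]} X_2^n — (X_1^n, Y_1^n). Then for each q, the Markov chain Y_{1,q} — (ω, C_{[1:r]}, X_1^{q:n}, X_2^{1:q-1}) — (X_{2,q}, Y_{2,q}) holds. -/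

import Mathlib

open Finset

/-- Total variation distance between two pmfs on a finite set: half the ℓ¹ distance. -/
noncomputable def TV {α : Type*} [Fintype α] (p q : α → ℝ) : ℝ :=
  (∑ a, |p a - q a|) / 2

/-- Shannon entropy of a pmf. -/
noncomputable def ent {α : Type*} [Fintype α] (p : α → ℝ) : ℝ :=
  -∑ a, p a * Real.log (p a)

/-- Binary entropy function. -/
noncomputable def hb (t : ℝ) : ℝ := -t * Real.log t - (1 - t) * Real.log (1 - t)

/-- `p` is a probability mass function. -/
def IsPMF {α : Type*} [Fintype α] (p : α → ℝ) : Prop :=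
  (∀ a, 0 ≤ p a) ∧ ∑ a, p a = 1

/-- Pushforward pmf (distribution of the random variable `X` under `μ`). -/
noncomputable def pushf {Ω α : Type*} [Fintype Ω] [DecidableEq α]
    (μ : Ω → ℝ) (X : Ω → α) : α → ℝ :=
  fun a => ∑ ω ∈ Finset.univ.filter (fun ω => X ω = a), μ ω

/-- Entropy of a random variable `X` on a finite probability space with pmf `μ`. -/
noncomputable def Hent {Ω α : Type*} [Fintype Ω] [Fintype α] [DecidableEq α]
    (μ : Ω → ℝ) (X : Ω → α) : ℝ := ent (pushf μ X)

/-- Conditional mutual information `I(A ; C | B)` of random variables on a finite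
probability space with pmf `μ`, defined via entropies:
`I(A;C|B) = H(A,B) + H(B,C) - H(A,B,C) - H(B)`. -/
noncomputable def condMI {Ω α β γ : Type*} [Fintype Ω] [Fintype α] [Fintype β] [Fintype γ]
    [DecidableEq α] [DecidableEq β] [DecidableEq γ]
    (μ : Ω → ℝ) (A : Ω → α) (B : Ω → β) (C : Ω → γ) : ℝ :=
  Hent μ (fun ω => (A ω, B ω)) + Hent μ (fun ω => (B ω, C ω))
    - Hent μ (fun ω => (A ω, B ω, C ω)) - Hent μ B

section PrBasics

variable {Ω : Type*} [Fintype Ω]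

open Classical in
/-- Probability of an event under a pmf. -/
noncomputable def Pr (μ : Ω → ℝ) (E : Ω → Prop) : ℝ :=
  ∑ ω, if E ω then μ ω else 0

lemma Pr_congr {μ : Ω → ℝ} {E E' : Ω → Prop} (h : ∀ ω, E ω ↔ E' ω) :
    Pr μ E = Pr μ E' := by
  classical
  unfold Pr
  refine Finset.sum_congr rfl fun ω _ => ?_
  by_cases hω : E ω
  · rw [if_pos hω, if_pos ((h ω).mp hω)]
  · rw [if_neg hω, if_neg (fun hh => hω ((h ω).mpr hh))]

lemma Pr_nonneg {μ : Ω → ℝ} (hμ : ∀ ω, 0 ≤ μ ω) (E : Ω → Prop) : 0 ≤ Pr μ E := by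
  classical
  unfold Pr
  exact Finset.sum_nonneg fun ω _ => by by_cases hω : E ω <;> simp [hω, hμ ω]

lemma Pr_mono {μ : Ω → ℝ} (hμ : ∀ ω, 0 ≤ μ ω) {E E' : Ω → Prop}
    (h : ∀ ω, E ω → E' ω) : Pr μ E ≤ Pr μ E' := by
  classical
  unfold Pr
  refine Finset.sum_le_sum fun ω _ => ?_
  by_cases hω : E ω
  · simp [hω, h ω hω]
  · by_cases hω' : E' ω <;> simp [hω, hω', hμ ω]

lemma Pr_false {μ : Ω → ℝ} : Pr μ (fun _ => False) = 0 := by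
  classical
  unfold Pr; simp

lemma Pr_true {μ : Ω → ℝ} (hμ : IsPMF μ) : Pr μ (fun _ => True) = 1 := by
  classical
  unfold Pr; simpa using hμ.2

lemma Pr_marg {ζ : Type*} [Fintype ζ] {μ : Ω → ℝ} (E : Ω → Prop) (Z : Ω → ζ) :
    Pr μ E = ∑ z, Pr μ (fun ω => E ω ∧ Z ω = z) := by
  classical
  unfold Pr
  rw [Finset.sum_comm]
  refine Finset.sum_congr rfl fun ω _ => ?_
  by_cases hω : E ω
  · simp [hω]
  · simp [hω]

lemma pushf_eq_Pr {α : Type*} [DecidableEq α] (μ : Ω → ℝ) (X : Ω → α) (a : α) :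
    pushf μ X a = Pr μ (fun ω => X ω = a) := by
  classical
  unfold pushf Pr
  rw [Finset.sum_filter]
  exact Finset.sum_congr rfl fun ω _ => by by_cases h : X ω = a <;> simp [h]

open Classical in
/-- `Pr` of a constant conjunct. -/
lemma Pr_const_and {μ : Ω → ℝ} (Q : Prop) (E : Ω → Prop) :
    Pr μ (fun ω => Q ∧ E ω) = if Q then Pr μ E else 0 := by
  by_cases hQ : Q
  · rw [if_pos hQ]; exact Pr_congr fun ω => by tauto
  · rw [if_neg hQ]
    rw [Pr_congr (E' := fun _ => False) fun ω => by tauto, Pr_false]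

end PrBasics

/-- The pointwise "slack" inequality and equality case. -/
lemma slack_key {p u v w : ℝ} (hp : 0 ≤ p) (hpu : p ≤ u) (hpv : p ≤ v)
    (huw : u ≤ w) (hvw : v ≤ w) :
    0 ≤ (if w = 0 then (0:ℝ) else u*v/w) - p
        + p*(Real.log p + Real.log w - Real.log u - Real.log v) ∧
    (((if w = 0 then (0:ℝ) else u*v/w) - p
        + p*(Real.log p + Real.log w - Real.log u - Real.log v) = 0) ↔ p*w = u*v) := by
  have hu : 0 ≤ u := le_trans hp hpu
  have hv : 0 ≤ v := le_trans hp hpv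
  have hw : 0 ≤ w := le_trans hu huw
  rcases eq_or_lt_of_le hw with hw0 | hwpos
  · have hu0 : u = 0 := le_antisymm (hw0 ▸ huw) hu
    have hv0 : v = 0 := le_antisymm (hw0 ▸ hvw) hv
    have hp0 : p = 0 := le_antisymm (hu0 ▸ hpu) hp
    simp [← hw0, hp0, hu0, hv0]
  · have hwne : w ≠ 0 := ne_of_gt hwpos
    simp only [hwne, if_false]
    rcases eq_or_lt_of_le hp with hp0 | hppos
    · have hp0' := hp0.symm; subst hp0'
      have hdn : 0 ≤ u*v/w := div_nonneg (mul_nonneg hu hv) hw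
      constructor
      · simp; linarith
      · simp only [zero_mul, sub_zero, add_zero, zero_add, Real.log_zero]
        rw [div_eq_zero_iff]
        constructor
        · rintro (h | h)
          · rw [h]
          · exact absurd h hwne
        · intro h; left; linarith
    · have hune : 0 < u := lt_of_lt_of_le hppos hpu
      have hvne : 0 < v := lt_of_lt_of_le hppos hpv
      set x : ℝ := u*v/(p*w) with hx
      have hxpos : 0 < x := div_pos (mul_pos hune hvne) (mul_pos hppos hwpos)
      have hrw : (u*v/w) - p + p*(Real.log p + Real.log w - Real.log u - Real.log v)
          = p * (x - 1 - Real.log x) := by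
        have hlx : Real.log x = Real.log u + Real.log v - Real.log p - Real.log w := by
          rw [hx, Real.log_div (by positivity) (by positivity),
            Real.log_mul (ne_of_gt hune) (ne_of_gt hvne),
            Real.log_mul (ne_of_gt hppos) (ne_of_gt hwpos)]
          ring
        have hpx : p * x = u*v/w := by
          rw [hx, mul_div_assoc', mul_div_mul_left _ _ hppos.ne']
        rw [hlx, ← hpx]; ring
      have hlog : Real.log x ≤ x - 1 := Real.log_le_sub_one_of_pos hxpos
      constructor
      · rw [hrw]; nlinarith
      · rw [hrw]
        constructor
        · intro h
          have hx1 : x = 1 := by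
            by_contra hne
            have := Real.log_lt_sub_one_of_pos hxpos hne
            nlinarith
          have : u*v = p*w := by
            rw [hx, div_eq_one_iff_eq (mul_pos hppos hwpos).ne'] at hx1
            linarith [hx1]
          linarith
        · intro h
          have hx1 : x = 1 := by rw [hx, ← h]; field_simp
          rw [hx1]; simp


section CORE
variable {Ω α β γ : Type*} [Fintype Ω] [Fintype α] [Fintype β] [Fintype γ]
    [DecidableEq α] [DecidableEq β] [DecidableEq γ]

theorem condMI_eq_zero_iff {μ : Ω → ℝ} (hμ : IsPMF μ) (A : Ω → α) (B : Ω → β) (C : Ω → γ) :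
    condMI μ A B C = 0 ↔ ∀ a b c,
      Pr μ (fun ω => A ω = a ∧ B ω = b ∧ C ω = c) * Pr μ (fun ω => B ω = b)
        = Pr μ (fun ω => A ω = a ∧ B ω = b) * Pr μ (fun ω => B ω = b ∧ C ω = c) := by
  classical
  set p3 : α → β → γ → ℝ := fun a b c => Pr μ (fun ω => A ω = a ∧ B ω = b ∧ C ω = c) with hp3
  set pab : α → β → ℝ := fun a b => Pr μ (fun ω => A ω = a ∧ B ω = b) with hpab
  set pbc : β → γ → ℝ := fun b c => Pr μ (fun ω => B ω = b ∧ C ω = c) with hpbc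
  set pb : β → ℝ := fun b => Pr μ (fun ω => B ω = b) with hpb
  -- marginal identities
  have hab : ∀ a b, pab a b = ∑ c, p3 a b c := by
    intro a b
    show Pr μ (fun ω => A ω = a ∧ B ω = b) = _
    rw [Pr_marg (μ := μ) (fun ω => A ω = a ∧ B ω = b) C]
    all_goals exact Finset.sum_congr rfl fun c _ => Pr_congr fun ω => by tauto
  have hbc : ∀ b c, pbc b c = ∑ a, p3 a b c := by
    intro b c
    show Pr μ (fun ω => B ω = b ∧ C ω = c) = _
    rw [Pr_marg (μ := μ) (fun ω => B ω = b ∧ C ω = c) A]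
    all_goals exact Finset.sum_congr rfl fun a _ => Pr_congr fun ω => by tauto
  have hbb : ∀ b, pb b = ∑ a, pab a b := by
    intro b
    show Pr μ (fun ω => B ω = b) = _
    rw [Pr_marg (μ := μ) (fun ω => B ω = b) A]
    all_goals exact Finset.sum_congr rfl fun a _ => Pr_congr fun ω => by tauto
  have hbb2 : ∀ b, pb b = ∑ c, pbc b c := by
    intro b
    show Pr μ (fun ω => B ω = b) = _
    rw [Pr_marg (μ := μ) (fun ω => B ω = b) C]
    all_goals exact Finset.sum_congr rfl fun c _ => Pr_congr fun ω => by tauto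
  have hb3 : ∀ b, pb b = ∑ a, ∑ c, p3 a b c := by
    intro b; rw [hbb b]
    exact Finset.sum_congr rfl fun a _ => hab a b
  have htot : ∑ b, pb b = 1 := by
    have h1 : Pr μ (fun _ : Ω => True) = 1 := Pr_true hμ
    rw [Pr_marg (μ := μ) (fun _ : Ω => True) B] at h1
    rw [← h1]
    all_goals exact Finset.sum_congr rfl fun b _ => (Pr_congr fun ω => by tauto).symm
  have htot3 : ∑ a, ∑ b, ∑ c, p3 a b c = 1 := by
    rw [Finset.sum_comm, ← htot]
    exact Finset.sum_congr rfl fun b _ => (hb3 b).symm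
  -- entropies as triple sums
  have e3 : Hent μ (fun ω => (A ω, B ω, C ω))
      = -∑ a, ∑ b, ∑ c, p3 a b c * Real.log (p3 a b c) := by
    unfold Hent ent
    simp only [Fintype.sum_prod_type]
    congr 1
    refine Finset.sum_congr rfl fun a _ => Finset.sum_congr rfl fun b _ =>
      Finset.sum_congr rfl fun c _ => ?_
    have : pushf μ (fun ω => (A ω, B ω, C ω)) (a, (b, c)) = p3 a b c := by
      rw [pushf_eq_Pr]; exact Pr_congr fun ω => by simp [Prod.ext_iff]
    rw [this]
  have e2ab : Hent μ (fun ω => (A ω, B ω)) = -∑ a, ∑ b, pab a b * Real.log (pab a b) := by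
    unfold Hent ent
    simp only [Fintype.sum_prod_type]
    congr 1
    refine Finset.sum_congr rfl fun a _ => Finset.sum_congr rfl fun b _ => ?_
    have : pushf μ (fun ω => (A ω, B ω)) (a, b) = pab a b := by
      rw [pushf_eq_Pr]; exact Pr_congr fun ω => by simp [Prod.ext_iff]
    rw [this]
  have e2bc : Hent μ (fun ω => (B ω, C ω)) = -∑ b, ∑ c, pbc b c * Real.log (pbc b c) := by
    unfold Hent ent
    simp only [Fintype.sum_prod_type]
    congr 1
    refine Finset.sum_congr rfl fun b _ => Finset.sum_congr rfl fun c _ => ?_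
    have : pushf μ (fun ω => (B ω, C ω)) (b, c) = pbc b c := by
      rw [pushf_eq_Pr]; exact Pr_congr fun ω => by simp [Prod.ext_iff]
    rw [this]
  have e1 : Hent μ B = -∑ b, pb b * Real.log (pb b) := by
    unfold Hent ent
    congr 1
    refine Finset.sum_congr rfl fun b _ => ?_
    rw [pushf_eq_Pr]
  -- rewrite entropies into full triple sums
  have Tab : ∑ a, ∑ b, pab a b * Real.log (pab a b)
      = ∑ a, ∑ b, ∑ c, p3 a b c * Real.log (pab a b) := by
    refine Finset.sum_congr rfl fun a _ => Finset.sum_congr rfl fun b _ => ?_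
    rw [← Finset.sum_mul, ← hab a b]
  have Tbc : ∑ b, ∑ c, pbc b c * Real.log (pbc b c)
      = ∑ a, ∑ b, ∑ c, p3 a b c * Real.log (pbc b c) := by
    calc ∑ b, ∑ c, pbc b c * Real.log (pbc b c)
        = ∑ b, ∑ c, ∑ a, p3 a b c * Real.log (pbc b c) := by
          refine Finset.sum_congr rfl fun b _ => Finset.sum_congr rfl fun c _ => ?_
          rw [← Finset.sum_mul, ← hbc b c]
      _ = ∑ b, ∑ a, ∑ c, p3 a b c * Real.log (pbc b c) :=
          Finset.sum_congr rfl fun b _ => Finset.sum_comm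
      _ = ∑ a, ∑ b, ∑ c, p3 a b c * Real.log (pbc b c) := Finset.sum_comm
  have Tb : ∑ b, pb b * Real.log (pb b)
      = ∑ a, ∑ b, ∑ c, p3 a b c * Real.log (pb b) := by
    calc ∑ b, pb b * Real.log (pb b)
        = ∑ b, ∑ a, ∑ c, p3 a b c * Real.log (pb b) := by
          refine Finset.sum_congr rfl fun b _ => ?_
          calc pb b * Real.log (pb b)
              = (∑ a, ∑ c, p3 a b c) * Real.log (pb b) := by rw [← hb3 b]
            _ = ∑ a, (∑ c, p3 a b c) * Real.log (pb b) := Finset.sum_mul _ _ _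
            _ = ∑ a, ∑ c, p3 a b c * Real.log (pb b) :=
                Finset.sum_congr rfl fun a _ => Finset.sum_mul _ _ _
      _ = ∑ a, ∑ b, ∑ c, p3 a b c * Real.log (pb b) := Finset.sum_comm
  have hCMI : condMI μ A B C = ∑ a, ∑ b, ∑ c,
      p3 a b c * (Real.log (p3 a b c) + Real.log (pb b)
        - Real.log (pab a b) - Real.log (pbc b c)) := by
    unfold condMI
    rw [e3, e2ab, e2bc, e1, Tab, Tbc, Tb]
    simp only [mul_add, mul_sub, Finset.sum_add_distrib, Finset.sum_sub_distrib]
    ring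
  -- slack terms
  set s : α → β → γ → ℝ := fun a b c =>
    (if pb b = 0 then (0:ℝ) else pab a b * pbc b c / pb b) - p3 a b c
      + p3 a b c * (Real.log (p3 a b c) + Real.log (pb b)
        - Real.log (pab a b) - Real.log (pbc b c)) with hs
  have hdom : ∀ a b c, 0 ≤ p3 a b c ∧ p3 a b c ≤ pab a b ∧ p3 a b c ≤ pbc b c
      ∧ pab a b ≤ pb b ∧ pbc b c ≤ pb b := by
    intro a b c
    refine ⟨Pr_nonneg hμ.1 _, Pr_mono hμ.1 fun ω h => ⟨h.1, h.2.1⟩,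
      Pr_mono hμ.1 fun ω h => ⟨h.2.1, h.2.2⟩,
      Pr_mono hμ.1 fun ω h => h.2, Pr_mono hμ.1 fun ω h => h.1⟩
  have hskey : ∀ a b c, 0 ≤ s a b c ∧ (s a b c = 0 ↔ p3 a b c * pb b = pab a b * pbc b c) := by
    intro a b c
    obtain ⟨h1, h2, h3, h4, h5⟩ := hdom a b c
    exact slack_key h1 h2 h3 h4 h5
  have hSIF : ∑ a, ∑ b, ∑ c, (if pb b = 0 then (0:ℝ) else pab a b * pbc b c / pb b) = 1 := by
    rw [Finset.sum_comm, ← htot]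
    refine Finset.sum_congr rfl fun b _ => ?_
    by_cases h : pb b = 0
    · simp [h]
    · simp only [h, if_false, div_eq_mul_inv]
      calc ∑ a, ∑ c, pab a b * pbc b c * (pb b)⁻¹
          = ∑ a, pab a b * (pb b * (pb b)⁻¹) := by
            refine Finset.sum_congr rfl fun a _ => ?_
            simp only [mul_assoc]
            rw [← Finset.mul_sum, ← Finset.sum_mul, ← hbb2 b]
        _ = (∑ a, pab a b) * (pb b * (pb b)⁻¹) := by rw [Finset.sum_mul]
        _ = pb b := by rw [← hbb b]; field_simp
  have hsum : ∑ a, ∑ b, ∑ c, s a b c = condMI μ A B C := by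
    rw [hCMI]
    simp only [hs, Finset.sum_add_distrib, Finset.sum_sub_distrib]
    rw [hSIF, htot3]
    ring
  constructor
  · intro h0 a b c
    have hz : ∑ a, ∑ b, ∑ c, s a b c = 0 := by rw [hsum, h0]
    have h1 : ∀ a ∈ (univ : Finset α), (∑ b, ∑ c, s a b c) = 0 :=
      (Finset.sum_eq_zero_iff_of_nonneg (fun a _ => Finset.sum_nonneg fun b _ =>
        Finset.sum_nonneg fun c _ => (hskey a b c).1)).mp hz
    have h2 : ∀ b ∈ (univ : Finset β), (∑ c, s a b c) = 0 :=
      (Finset.sum_eq_zero_iff_of_nonneg (fun b _ => Finset.sum_nonneg fun c _ =>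
        (hskey a b c).1)).mp (h1 a (mem_univ a))
    have h3 : ∀ c ∈ (univ : Finset γ), s a b c = 0 :=
      (Finset.sum_eq_zero_iff_of_nonneg (fun c _ => (hskey a b c).1)).mp (h2 b (mem_univ b))
    exact (hskey a b c).2.mp (h3 c (mem_univ c))
  · intro hfac
    rw [← hsum]
    refine Finset.sum_eq_zero fun a _ => Finset.sum_eq_zero fun b _ =>
      Finset.sum_eq_zero fun c _ => ?_
    exact (hskey a b c).2.mpr (hfac a b c)
end CORE

section COR
variable {Ω α β γ : Type*} [Fintype Ω] [Fintype α] [Fintype β] [Fintype γ]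
    [DecidableEq α] [DecidableEq β] [DecidableEq γ]

open Classical in
/-- From a vanishing conditional mutual information, extract the conditional
factorization with an explicit ratio function. -/
lemma CI_ratio {μ : Ω → ℝ} (hμ : IsPMF μ) {A : Ω → α} {B : Ω → β} {C : Ω → γ}
    (h : condMI μ A B C = 0) (a : α) (b : β) (c : γ) :
    Pr μ (fun ω => A ω = a ∧ B ω = b ∧ C ω = c)
      = (if Pr μ (fun ω => B ω = b) = 0 then (0:ℝ)
          else Pr μ (fun ω => A ω = a ∧ B ω = b) / Pr μ (fun ω => B ω = b))
        * Pr μ (fun ω => B ω = b ∧ C ω = c) := by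
  have key := (condMI_eq_zero_iff hμ A B C).mp h a b c
  by_cases hb : Pr μ (fun ω => B ω = b) = 0
  · rw [if_pos hb]
    have h0 : Pr μ (fun ω => A ω = a ∧ B ω = b ∧ C ω = c) ≤ 0 := by
      rw [← hb]; exact Pr_mono hμ.1 fun ω hh => hh.2.1
    have h1 := Pr_nonneg hμ.1 (fun ω => A ω = a ∧ B ω = b ∧ C ω = c)
    rw [le_antisymm h0 h1, zero_mul]
  · rw [if_neg hb]
    rw [div_mul_eq_mul_div, eq_div_iff hb]
    linarith [key]

/-- If the joint pmf of `(A,B,C)` factors through `B`, then `I(A;C|B) = 0`. -/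
lemma CI_of_factor {μ : Ω → ℝ} (hμ : IsPMF μ) (A : Ω → α) (B : Ω → β) (C : Ω → γ)
    (f : α → β → ℝ) (k : β → γ → ℝ)
    (h : ∀ a b c, Pr μ (fun ω => A ω = a ∧ B ω = b ∧ C ω = c) = f a b * k b c) :
    condMI μ A B C = 0 := by
  rw [condMI_eq_zero_iff hμ A B C]
  intro a b c
  have hab : Pr μ (fun ω => A ω = a ∧ B ω = b) = f a b * ∑ c', k b c' := by
    rw [Pr_marg (μ := μ) (fun ω => A ω = a ∧ B ω = b) C, Finset.mul_sum]
    refine Finset.sum_congr rfl fun c' _ => ?_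
    rw [← h a b c']
    exact Pr_congr fun ω => by tauto
  have hbc : Pr μ (fun ω => B ω = b ∧ C ω = c) = (∑ a', f a' b) * k b c := by
    rw [Pr_marg (μ := μ) (fun ω => B ω = b ∧ C ω = c) A, Finset.sum_mul]
    refine Finset.sum_congr rfl fun a' _ => ?_
    rw [← h a' b c]
    exact Pr_congr fun ω => by tauto
  have hb : Pr μ (fun ω => B ω = b) = (∑ a', f a' b) * ∑ c', k b c' := by
    rw [Pr_marg (μ := μ) (fun ω => B ω = b) A, Finset.sum_mul]
    refine Finset.sum_congr rfl fun a' _ => ?_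
    rw [Pr_marg (μ := μ) (fun ω => B ω = b ∧ A ω = a') C, Finset.mul_sum]
    refine Finset.sum_congr rfl fun c' _ => ?_
    rw [← h a' b c']
    exact Pr_congr fun ω => by tauto
  rw [h a b c, hab, hbc, hb]; ring
end COR

/-- with the interactive structure of Statements 9–10 plus output
variables `Y_1^n, Y_2^n` satisfying `Y_1^n — (G, C_{[1:r]}, X_1^n) — (X_2^n, Y_2^n)`
and `Y_2^n — (G, C_{[1:r]}, X_2^n) — (X_1^n, Y_1^n)`, for each `q` the Markov chain
`Y_{1,q} — (G, C_{[1:r]}, X_1^{q:n}, X_2^{1:q-1}) — (X_{2,q}, Y_{2,q})` holds. -/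
theorem markov_single_letter_output {Ω 𝒜 𝒞 𝒳₁ 𝒳₂ 𝒴₁ 𝒴₂ : Type*} {n r : ℕ}
    [Fintype Ω] [Fintype 𝒜] [Fintype 𝒞] [Fintype 𝒳₁] [Fintype 𝒳₂]
    [Fintype 𝒴₁] [Fintype 𝒴₂]
    [DecidableEq 𝒜] [DecidableEq 𝒞] [DecidableEq 𝒳₁] [DecidableEq 𝒳₂]
    [DecidableEq 𝒴₁] [DecidableEq 𝒴₂]
    (μ : Ω → ℝ) (hμ : IsPMF μ)
    (G : Ω → 𝒜) (C : Fin r → Ω → 𝒞)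
    (X1 : Ω → Fin n → 𝒳₁) (X2 : Ω → Fin n → 𝒳₂)
    (Y1 : Ω → Fin n → 𝒴₁) (Y2 : Ω → Fin n → 𝒴₂)
    (p : 𝒳₁ × 𝒳₂ → ℝ) (hp : IsPMF p)
    (hiid : pushf μ (fun ω => (G ω, fun q => (X1 ω q, X2 ω q)))
      = fun z => pushf μ G z.1 * ∏ q, p (z.2 q))
    (hodd : ∀ i : Fin r, Even i.val →
      condMI μ (C i)
        (fun ω => (G ω, (fun j : Fin i.val => C (Fin.castLE i.isLt.le j) ω), X1 ω))
        X2 = 0)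
    (heven : ∀ i : Fin r, Odd i.val →
      condMI μ (C i)
        (fun ω => (G ω, (fun j : Fin i.val => C (Fin.castLE i.isLt.le j) ω), X2 ω))
        X1 = 0)
    (hY1 : condMI μ Y1 (fun ω => (G ω, (fun i : Fin r => C i ω), X1 ω))
      (fun ω => (X2 ω, Y2 ω)) = 0)
    (hY2 : condMI μ Y2 (fun ω => (G ω, (fun i : Fin r => C i ω), X2 ω))
      (fun ω => (X1 ω, Y1 ω)) = 0) :
    ∀ q : Fin n,
      condMI μ (fun ω => Y1 ω q)
        (fun ω => ((G ω, (fun i : Fin r => C i ω)),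
          ((fun j : {j : Fin n // q ≤ j} => X1 ω j.1),
           (fun j : {j : Fin n // j < q} => X2 ω j.1))))
        (fun ω => (X2 ω q, Y2 ω q)) = 0 := by
  classical
  -- Step 1: transcript factorization by induction on the number of rounds
  have key : ∀ i : ℕ, ∀ h : i ≤ r,
      ∃ φ : 𝒜 → (Fin i → 𝒞) → (Fin n → 𝒳₁) → ℝ,
      ∃ ψ : 𝒜 → (Fin i → 𝒞) → (Fin n → 𝒳₂) → ℝ,
        ∀ g c x1 x2,
          Pr μ (fun ω => G ω = g ∧ (fun j : Fin i => C (Fin.castLE h j) ω) = c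
              ∧ X1 ω = x1 ∧ X2 ω = x2)
            = (∏ j, p (x1 j, x2 j)) * φ g c x1 * ψ g c x2 := by
    intro i
    induction i with
    | zero =>
      intro h
      refine ⟨fun g _ _ => pushf μ G g, fun _ _ _ => 1, fun g c x1 x2 => ?_⟩
      have h0 := congrFun hiid (g, fun q => (x1 q, x2 q))
      rw [pushf_eq_Pr] at h0
      have heq : Pr μ (fun ω => G ω = g ∧ (fun j : Fin 0 => C (Fin.castLE h j) ω) = c
            ∧ X1 ω = x1 ∧ X2 ω = x2)
          = Pr μ (fun ω => (G ω, fun q => (X1 ω q, X2 ω q))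
              = ((g, fun q => (x1 q, x2 q)) : 𝒜 × (Fin n → 𝒳₁ × 𝒳₂))) := by
        refine Pr_congr fun ω => ?_
        simp only [Prod.mk.injEq, funext_iff, Prod.mk.injEq, forall_and,
          eq_iff_true_of_subsingleton, true_and]
      rw [heq, h0]
      ring
    | succ i ih =>
      intro h
      have hir : i < r := Nat.lt_of_lt_of_le (Nat.lt_succ_self i) h
      have hi : i ≤ r := le_of_lt hir
      obtain ⟨φ, ψ, hfac⟩ := ih hi
      -- bridge between transcripts of length i+1 and (last message, length-i transcript)
      have hbridge : ∀ (ω : Ω) (c : Fin (i+1) → 𝒞),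
          ((fun j : Fin (i+1) => C (Fin.castLE h j) ω) = c) ↔
            (C ⟨i, hir⟩ ω = c (Fin.last i)
              ∧ (fun j : Fin i => C (Fin.castLE hi j) ω) = fun j => c j.castSucc) := by
        intro ω c
        constructor
        · rintro rfl
          exact ⟨rfl, rfl⟩
        · rintro ⟨h1, h2⟩
          funext j
          refine Fin.lastCases ?_ ?_ j
          · exact h1
          · intro j'
            exact congrFun h2 j'
      rcases Nat.even_or_odd i with hpar | hpar
      · -- player 1 speaks
        have hmi : condMI μ (C ⟨i, hir⟩)
            (fun ω => (G ω, (fun j : Fin i => C (Fin.castLE hi j) ω), X1 ω)) X2 = 0 :=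
          hodd ⟨i, hir⟩ hpar
        have hratio := CI_ratio hμ hmi
        refine ⟨fun g c x1 => φ g (fun j => c j.castSucc) x1 *
            (if Pr μ (fun ω => (G ω, (fun j : Fin i => C (Fin.castLE hi j) ω), X1 ω)
                  = (g, fun j => c j.castSucc, x1)) = 0 then (0:ℝ)
             else Pr μ (fun ω => C ⟨i, hir⟩ ω = c (Fin.last i)
                    ∧ (G ω, (fun j : Fin i => C (Fin.castLE hi j) ω), X1 ω)
                      = (g, fun j => c j.castSucc, x1))
                / Pr μ (fun ω => (G ω, (fun j : Fin i => C (Fin.castLE hi j) ω), X1 ω)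
                    = (g, fun j => c j.castSucc, x1))),
          fun g c x2 => ψ g (fun j => c j.castSucc) x2, fun g c x1 x2 => ?_⟩
      
        calc Pr μ (fun ω => G ω = g ∧ (fun j : Fin (i+1) => C (Fin.castLE h j) ω) = c
              ∧ X1 ω = x1 ∧ X2 ω = x2)
            = Pr μ (fun ω => C ⟨i, hir⟩ ω = c (Fin.last i)
                ∧ (G ω, (fun j : Fin i => C (Fin.castLE hi j) ω), X1 ω)
                    = (g, fun j => c j.castSucc, x1)
                ∧ X2 ω = x2) := by
              refine Pr_congr fun ω => ?_
              rw [hbridge ω c]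
              simp only [Prod.mk.injEq]
              tauto
          _ = (if Pr μ (fun ω => (G ω, (fun j : Fin i => C (Fin.castLE hi j) ω), X1 ω)
                  = (g, fun j => c j.castSucc, x1)) = 0 then (0:ℝ)
               else Pr μ (fun ω => C ⟨i, hir⟩ ω = c (Fin.last i)
                      ∧ (G ω, (fun j : Fin i => C (Fin.castLE hi j) ω), X1 ω)
                        = (g, fun j => c j.castSucc, x1))
                  / Pr μ (fun ω => (G ω, (fun j : Fin i => C (Fin.castLE hi j) ω), X1 ω)
                      = (g, fun j => c j.castSucc, x1)))
              * Pr μ (fun ω => (G ω, (fun j : Fin i => C (Fin.castLE hi j) ω), X1 ω)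
                  = (g, fun j => c j.castSucc, x1) ∧ X2 ω = x2) :=
              hratio (c (Fin.last i)) (g, fun j => c j.castSucc, x1) x2
          _ = _ := by
              have : Pr μ (fun ω => (G ω, (fun j : Fin i => C (Fin.castLE hi j) ω), X1 ω)
                    = (g, fun j => c j.castSucc, x1) ∧ X2 ω = x2)
                  = Pr μ (fun ω => G ω = g
                      ∧ (fun j : Fin i => C (Fin.castLE hi j) ω) = (fun j => c j.castSucc)
                      ∧ X1 ω = x1 ∧ X2 ω = x2) := by
                refine Pr_congr fun ω => ?_
                simp only [Prod.mk.injEq]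
                tauto
              rw [this, hfac g (fun j => c j.castSucc) x1 x2]
              ring
      · -- player 2 speaks
        have hmi : condMI μ (C ⟨i, hir⟩)
            (fun ω => (G ω, (fun j : Fin i => C (Fin.castLE hi j) ω), X2 ω)) X1 = 0 :=
          heven ⟨i, hir⟩ hpar
        have hratio := CI_ratio hμ hmi
        refine ⟨fun g c x1 => φ g (fun j => c j.castSucc) x1,
          fun g c x2 => ψ g (fun j => c j.castSucc) x2 *
            (if Pr μ (fun ω => (G ω, (fun j : Fin i => C (Fin.castLE hi j) ω), X2 ω)
                  = (g, fun j => c j.castSucc, x2)) = 0 then (0:ℝ)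
             else Pr μ (fun ω => C ⟨i, hir⟩ ω = c (Fin.last i)
                    ∧ (G ω, (fun j : Fin i => C (Fin.castLE hi j) ω), X2 ω)
                      = (g, fun j => c j.castSucc, x2))
                / Pr μ (fun ω => (G ω, (fun j : Fin i => C (Fin.castLE hi j) ω), X2 ω)
                    = (g, fun j => c j.castSucc, x2))), fun g c x1 x2 => ?_⟩
        calc Pr μ (fun ω => G ω = g ∧ (fun j : Fin (i+1) => C (Fin.castLE h j) ω) = c
              ∧ X1 ω = x1 ∧ X2 ω = x2)
            = Pr μ (fun ω => C ⟨i, hir⟩ ω = c (Fin.last i)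
                ∧ (G ω, (fun j : Fin i => C (Fin.castLE hi j) ω), X2 ω)
                    = (g, fun j => c j.castSucc, x2)
                ∧ X1 ω = x1) := by
              refine Pr_congr fun ω => ?_
              rw [hbridge ω c]
              simp only [Prod.mk.injEq]
              tauto
          _ = (if Pr μ (fun ω => (G ω, (fun j : Fin i => C (Fin.castLE hi j) ω), X2 ω)
                  = (g, fun j => c j.castSucc, x2)) = 0 then (0:ℝ)
               else Pr μ (fun ω => C ⟨i, hir⟩ ω = c (Fin.last i)
                      ∧ (G ω, (fun j : Fin i => C (Fin.castLE hi j) ω), X2 ω)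
                        = (g, fun j => c j.castSucc, x2))
                  / Pr μ (fun ω => (G ω, (fun j : Fin i => C (Fin.castLE hi j) ω), X2 ω)
                      = (g, fun j => c j.castSucc, x2)))
              * Pr μ (fun ω => (G ω, (fun j : Fin i => C (Fin.castLE hi j) ω), X2 ω)
                  = (g, fun j => c j.castSucc, x2) ∧ X1 ω = x1) :=
              hratio (c (Fin.last i)) (g, fun j => c j.castSucc, x2) x1
          _ = _ := by
              have : Pr μ (fun ω => (G ω, (fun j : Fin i => C (Fin.castLE hi j) ω), X2 ω)
                    = (g, fun j => c j.castSucc, x2) ∧ X1 ω = x1)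
                  = Pr μ (fun ω => G ω = g
                      ∧ (fun j : Fin i => C (Fin.castLE hi j) ω) = (fun j => c j.castSucc)
                      ∧ X1 ω = x1 ∧ X2 ω = x2) := by
                refine Pr_congr fun ω => ?_
                simp only [Prod.mk.injEq]
                tauto
              rw [this, hfac g (fun j => c j.castSucc) x1 x2]
              ring
  -- Step 2: full joint factorization including the outputs
  obtain ⟨φ, ψ, hfacR⟩ := key r le_rfl
  have hfull : ∀ g c x1 x2, Pr μ (fun ω => G ω = g ∧ (fun i : Fin r => C i ω) = c
        ∧ X1 ω = x1 ∧ X2 ω = x2) = (∏ j, p (x1 j, x2 j)) * φ g c x1 * ψ g c x2 :=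
    fun g c x1 x2 => hfacR g c x1 x2
  have hr1 := CI_ratio hμ hY1
  have hr2 := CI_ratio hμ hY2
  have hstep1 : ∀ g c x1 x2 y1,
      Pr μ (fun ω => G ω = g ∧ (fun i : Fin r => C i ω) = c ∧ X1 ω = x1 ∧ X2 ω = x2
          ∧ Y1 ω = y1)
        = (∏ j, p (x1 j, x2 j))
          * (φ g c x1 *
            (if Pr μ (fun ω => (G ω, (fun i : Fin r => C i ω), X1 ω) = (g, c, x1)) = 0
             then (0:ℝ)
             else Pr μ (fun ω => Y1 ω = y1
                    ∧ (G ω, (fun i : Fin r => C i ω), X1 ω) = (g, c, x1))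
                / Pr μ (fun ω => (G ω, (fun i : Fin r => C i ω), X1 ω) = (g, c, x1))))
          * ψ g c x2 := by
    intro g c x1 x2 y1
    calc Pr μ (fun ω => G ω = g ∧ (fun i : Fin r => C i ω) = c ∧ X1 ω = x1 ∧ X2 ω = x2
            ∧ Y1 ω = y1)
        = ∑ y2, Pr μ (fun ω => (G ω = g ∧ (fun i : Fin r => C i ω) = c ∧ X1 ω = x1
            ∧ X2 ω = x2 ∧ Y1 ω = y1) ∧ Y2 ω = y2) := Pr_marg _ Y2
      _ = ∑ y2, Pr μ (fun ω => Y1 ω = y1 ∧ (G ω, (fun i : Fin r => C i ω), X1 ω) = (g, c, x1)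
            ∧ (X2 ω, Y2 ω) = (x2, y2)) :=
          Finset.sum_congr rfl fun y2 _ => Pr_congr fun ω => by
            simp only [Prod.mk.injEq]; tauto
      _ = ∑ y2, (if Pr μ (fun ω => (G ω, (fun i : Fin r => C i ω), X1 ω) = (g, c, x1)) = 0
             then (0:ℝ)
             else Pr μ (fun ω => Y1 ω = y1
                    ∧ (G ω, (fun i : Fin r => C i ω), X1 ω) = (g, c, x1))
                / Pr μ (fun ω => (G ω, (fun i : Fin r => C i ω), X1 ω) = (g, c, x1)))
            * Pr μ (fun ω => (G ω, (fun i : Fin r => C i ω), X1 ω) = (g, c, x1)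
                ∧ (X2 ω, Y2 ω) = (x2, y2)) :=
          Finset.sum_congr rfl fun y2 _ => hr1 y1 (g, c, x1) (x2, y2)
      _ = (if Pr μ (fun ω => (G ω, (fun i : Fin r => C i ω), X1 ω) = (g, c, x1)) = 0
             then (0:ℝ)
             else Pr μ (fun ω => Y1 ω = y1
                    ∧ (G ω, (fun i : Fin r => C i ω), X1 ω) = (g, c, x1))
                / Pr μ (fun ω => (G ω, (fun i : Fin r => C i ω), X1 ω) = (g, c, x1)))
          * ∑ y2, Pr μ (fun ω => (G ω, (fun i : Fin r => C i ω), X1 ω) = (g, c, x1)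
                ∧ (X2 ω, Y2 ω) = (x2, y2)) := (Finset.mul_sum _ _ _).symm
      _ = (if Pr μ (fun ω => (G ω, (fun i : Fin r => C i ω), X1 ω) = (g, c, x1)) = 0
             then (0:ℝ)
             else Pr μ (fun ω => Y1 ω = y1
                    ∧ (G ω, (fun i : Fin r => C i ω), X1 ω) = (g, c, x1))
                / Pr μ (fun ω => (G ω, (fun i : Fin r => C i ω), X1 ω) = (g, c, x1)))
          * ∑ y2, Pr μ (fun ω => (G ω = g ∧ (fun i : Fin r => C i ω) = c ∧ X1 ω = x1
              ∧ X2 ω = x2) ∧ Y2 ω = y2) := by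
          congr 1
          exact Finset.sum_congr rfl fun y2 _ => Pr_congr fun ω => by
            simp only [Prod.mk.injEq]; tauto
      _ = _ := by
          rw [← Pr_marg (μ := μ) _ Y2, hfull g c x1 x2]
          ring
  have hMF : ∀ g c x1 x2 y1 y2,
      Pr μ (fun ω => G ω = g ∧ (fun i : Fin r => C i ω) = c ∧ X1 ω = x1 ∧ X2 ω = x2
          ∧ Y1 ω = y1 ∧ Y2 ω = y2)
        = (∏ j, p (x1 j, x2 j))
          * (φ g c x1 *
            (if Pr μ (fun ω => (G ω, (fun i : Fin r => C i ω), X1 ω) = (g, c, x1)) = 0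
             then (0:ℝ)
             else Pr μ (fun ω => Y1 ω = y1
                    ∧ (G ω, (fun i : Fin r => C i ω), X1 ω) = (g, c, x1))
                / Pr μ (fun ω => (G ω, (fun i : Fin r => C i ω), X1 ω) = (g, c, x1))))
          * (ψ g c x2 *
            (if Pr μ (fun ω => (G ω, (fun i : Fin r => C i ω), X2 ω) = (g, c, x2)) = 0
             then (0:ℝ)
             else Pr μ (fun ω => Y2 ω = y2
                    ∧ (G ω, (fun i : Fin r => C i ω), X2 ω) = (g, c, x2))
                / Pr μ (fun ω => (G ω, (fun i : Fin r => C i ω), X2 ω) = (g, c, x2)))) := by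
    intro g c x1 x2 y1 y2
    calc Pr μ (fun ω => G ω = g ∧ (fun i : Fin r => C i ω) = c ∧ X1 ω = x1 ∧ X2 ω = x2
            ∧ Y1 ω = y1 ∧ Y2 ω = y2)
        = Pr μ (fun ω => Y2 ω = y2 ∧ (G ω, (fun i : Fin r => C i ω), X2 ω) = (g, c, x2)
            ∧ (X1 ω, Y1 ω) = (x1, y1)) :=
          Pr_congr fun ω => by simp only [Prod.mk.injEq]; tauto
      _ = (if Pr μ (fun ω => (G ω, (fun i : Fin r => C i ω), X2 ω) = (g, c, x2)) = 0
             then (0:ℝ)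
             else Pr μ (fun ω => Y2 ω = y2
                    ∧ (G ω, (fun i : Fin r => C i ω), X2 ω) = (g, c, x2))
                / Pr μ (fun ω => (G ω, (fun i : Fin r => C i ω), X2 ω) = (g, c, x2)))
          * Pr μ (fun ω => (G ω, (fun i : Fin r => C i ω), X2 ω) = (g, c, x2)
              ∧ (X1 ω, Y1 ω) = (x1, y1)) := hr2 y2 (g, c, x2) (x1, y1)
      _ = (if Pr μ (fun ω => (G ω, (fun i : Fin r => C i ω), X2 ω) = (g, c, x2)) = 0
             then (0:ℝ)
             else Pr μ (fun ω => Y2 ω = y2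
                    ∧ (G ω, (fun i : Fin r => C i ω), X2 ω) = (g, c, x2))
                / Pr μ (fun ω => (G ω, (fun i : Fin r => C i ω), X2 ω) = (g, c, x2)))
          * Pr μ (fun ω => G ω = g ∧ (fun i : Fin r => C i ω) = c ∧ X1 ω = x1 ∧ X2 ω = x2
              ∧ Y1 ω = y1) := by
          congr 1
          exact Pr_congr fun ω => by simp only [Prod.mk.injEq]; tauto
      _ = _ := by
          rw [hstep1 g c x1 x2 y1]
          ring
  -- Step 3: single letterization
  obtain ⟨F, K, hMF'⟩ :
      ∃ F : 𝒜 → (Fin r → 𝒞) → (Fin n → 𝒳₁) → (Fin n → 𝒴₁) → ℝ,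
      ∃ K : 𝒜 → (Fin r → 𝒞) → (Fin n → 𝒳₂) → (Fin n → 𝒴₂) → ℝ,
      ∀ g c x1 x2 y1 y2,
        Pr μ (fun ω => G ω = g ∧ (fun i : Fin r => C i ω) = c ∧ X1 ω = x1 ∧ X2 ω = x2
            ∧ Y1 ω = y1 ∧ Y2 ω = y2)
          = (∏ j, p (x1 j, x2 j)) * F g c x1 y1 * K g c x2 y2 := ⟨_, _, hMF⟩
  intro q
  refine CI_of_factor hμ _ _ _
    (fun a b => ∑ x1 : Fin n → 𝒳₁, ∑ y1 : Fin n → 𝒴₁,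
      if (fun j : {j : Fin n // q ≤ j} => x1 j.1) = b.2.1 ∧ y1 q = a
      then (∏ j : {j : Fin n // j < q}, p (x1 j.1, b.2.2 j)) * F b.1.1 b.1.2 x1 y1 else 0)
    (fun b cc => ∑ x2 : Fin n → 𝒳₂, ∑ y2 : Fin n → 𝒴₂,
      if (fun j : {j : Fin n // j < q} => x2 j.1) = b.2.2 ∧ x2 q = cc.1 ∧ y2 q = cc.2
      then (∏ j : {j : Fin n // q ≤ j}, p (b.2.1 j, x2 j.1)) * K b.1.1 b.1.2 x2 y2 else 0)
    ?_
  rintro a ⟨⟨g, c⟩, u, v⟩ ⟨c1, c2⟩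
  dsimp only
  have hterm : ∀ (x1 : Fin n → 𝒳₁) (x2 : Fin n → 𝒳₂) (y1 : Fin n → 𝒴₁) (y2 : Fin n → 𝒴₂),
      Pr μ (fun ω => (Y1 ω q = a
          ∧ ((G ω, (fun i : Fin r => C i ω)),
              ((fun j : {j : Fin n // q ≤ j} => X1 ω j.1),
               (fun j : {j : Fin n // j < q} => X2 ω j.1))) = ((g, c), (u, v))
          ∧ (X2 ω q, Y2 ω q) = (c1, c2))
          ∧ (X1 ω, X2 ω, Y1 ω, Y2 ω) = (x1, x2, y1, y2))
        = (if (((fun j : {j : Fin n // q ≤ j} => x1 j.1) = u ∧ y1 q = a)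
              ∧ ((fun j : {j : Fin n // j < q} => x2 j.1) = v ∧ x2 q = c1 ∧ y2 q = c2))
           then (∏ j, p (x1 j, x2 j)) * F g c x1 y1 * K g c x2 y2 else 0) := by
    intro x1 x2 y1 y2
    have hiff : ∀ ω, ((Y1 ω q = a
          ∧ ((G ω, (fun i : Fin r => C i ω)),
              ((fun j : {j : Fin n // q ≤ j} => X1 ω j.1),
               (fun j : {j : Fin n // j < q} => X2 ω j.1))) = ((g, c), (u, v))
          ∧ (X2 ω q, Y2 ω q) = (c1, c2))
          ∧ (X1 ω, X2 ω, Y1 ω, Y2 ω) = (x1, x2, y1, y2))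
        ↔ ((((fun j : {j : Fin n // q ≤ j} => x1 j.1) = u ∧ y1 q = a)
              ∧ ((fun j : {j : Fin n // j < q} => x2 j.1) = v ∧ x2 q = c1 ∧ y2 q = c2))
          ∧ (G ω = g ∧ (fun i : Fin r => C i ω) = c ∧ X1 ω = x1 ∧ X2 ω = x2
            ∧ Y1 ω = y1 ∧ Y2 ω = y2)) := by
      intro ω
      constructor
      · rintro ⟨⟨hA, hB, hC⟩, hZ⟩
        simp only [Prod.mk.injEq] at hB hC hZ
        obtain ⟨⟨hg, hc⟩, hu, hv⟩ := hB
        obtain ⟨hc1, hc2⟩ := hC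
        obtain ⟨h1, h2, h3, h4⟩ := hZ
        subst h1 h2 h3 h4
        exact ⟨⟨⟨hu, hA⟩, hv, hc1, hc2⟩, hg, hc, rfl, rfl, rfl, rfl⟩
      · rintro ⟨⟨⟨hu, hA⟩, hv, hc1, hc2⟩, hg, hc, h1, h2, h3, h4⟩
        subst h1 h2 h3 h4
        refine ⟨⟨hA, ?_, ?_⟩, rfl⟩
        · simp only [Prod.mk.injEq]
          exact ⟨⟨hg, hc⟩, hu, hv⟩
        · simp only [Prod.mk.injEq]
          exact ⟨hc1, hc2⟩
    rw [Pr_congr hiff, Pr_const_and, hMF']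
    split_ifs <;> rfl
  have hsplit : ∀ (x1 : Fin n → 𝒳₁) (x2 : Fin n → 𝒳₂) (y1 : Fin n → 𝒴₁) (y2 : Fin n → 𝒴₂),
      (if (((fun j : {j : Fin n // q ≤ j} => x1 j.1) = u ∧ y1 q = a)
            ∧ ((fun j : {j : Fin n // j < q} => x2 j.1) = v ∧ x2 q = c1 ∧ y2 q = c2))
         then (∏ j, p (x1 j, x2 j)) * F g c x1 y1 * K g c x2 y2 else 0)
      = (if (fun j : {j : Fin n // q ≤ j} => x1 j.1) = u ∧ y1 q = a
         then (∏ j : {j : Fin n // j < q}, p (x1 j.1, v j)) * F g c x1 y1 else 0)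
        * (if (fun j : {j : Fin n // j < q} => x2 j.1) = v ∧ x2 q = c1 ∧ y2 q = c2
           then (∏ j : {j : Fin n // q ≤ j}, p (u j, x2 j.1)) * K g c x2 y2 else 0) := by
    intro x1 x2 y1 y2
    by_cases h1 : (fun j : {j : Fin n // q ≤ j} => x1 j.1) = u ∧ y1 q = a
    · by_cases h2 : (fun j : {j : Fin n // j < q} => x2 j.1) = v ∧ x2 q = c1 ∧ y2 q = c2
      · rw [if_pos ⟨h1, h2⟩, if_pos h1, if_pos h2]
        have hW : (∏ j, p (x1 j, x2 j))
            = (∏ j : {j : Fin n // j < q}, p (x1 j.1, v j))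
              * (∏ j : {j : Fin n // q ≤ j}, p (u j, x2 j.1)) := by
          rw [← Fintype.prod_subtype_mul_prod_subtype (fun j : Fin n => j < q)
              (fun j => p (x1 j, x2 j))]
          congr 1
          · exact Fintype.prod_congr _ _ fun j => by rw [← congrFun h2.1 j]
          · refine Fintype.prod_equiv (Equiv.subtypeEquivRight fun j => not_lt) _ _ fun j => ?_
            rw [← congrFun h1.1 (Equiv.subtypeEquivRight (fun j => not_lt) j)]
            rfl
        rw [hW]; ring
      · rw [if_neg (fun hc => h2 hc.2), if_neg h2, mul_zero]
    · rw [if_neg (fun hc => h1 hc.1), if_neg h1, zero_mul]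
  calc Pr μ (fun ω => Y1 ω q = a
          ∧ ((G ω, (fun i : Fin r => C i ω)),
              ((fun j : {j : Fin n // q ≤ j} => X1 ω j.1),
               (fun j : {j : Fin n // j < q} => X2 ω j.1))) = ((g, c), (u, v))
          ∧ (X2 ω q, Y2 ω q) = (c1, c2))
      = ∑ z : (Fin n → 𝒳₁) × (Fin n → 𝒳₂) × (Fin n → 𝒴₁) × (Fin n → 𝒴₂),
          Pr μ (fun ω => (Y1 ω q = a
            ∧ ((G ω, (fun i : Fin r => C i ω)),
                ((fun j : {j : Fin n // q ≤ j} => X1 ω j.1),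
                 (fun j : {j : Fin n // j < q} => X2 ω j.1))) = ((g, c), (u, v))
            ∧ (X2 ω q, Y2 ω q) = (c1, c2))
            ∧ (X1 ω, X2 ω, Y1 ω, Y2 ω) = z) :=
        Pr_marg _ (fun ω => (X1 ω, X2 ω, Y1 ω, Y2 ω))
    _ = ∑ x1, ∑ x2, ∑ y1, ∑ y2,
          (if (fun j : {j : Fin n // q ≤ j} => x1 j.1) = u ∧ y1 q = a
           then (∏ j : {j : Fin n // j < q}, p (x1 j.1, v j)) * F g c x1 y1 else 0)
          * (if (fun j : {j : Fin n // j < q} => x2 j.1) = v ∧ x2 q = c1 ∧ y2 q = c2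
             then (∏ j : {j : Fin n // q ≤ j}, p (u j, x2 j.1)) * K g c x2 y2 else 0) := by
        rw [Fintype.sum_prod_type]
        refine Finset.sum_congr rfl fun x1 _ => ?_
        rw [Fintype.sum_prod_type]
        refine Finset.sum_congr rfl fun x2 _ => ?_
        rw [Fintype.sum_prod_type]
        refine Finset.sum_congr rfl fun y1 _ => Finset.sum_congr rfl fun y2 _ => ?_
        rw [hterm x1 x2 y1 y2, hsplit x1 x2 y1 y2]
    _ = ∑ x1, ∑ y1,
          (if (fun j : {j : Fin n // q ≤ j} => x1 j.1) = u ∧ y1 q = a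
           then (∏ j : {j : Fin n // j < q}, p (x1 j.1, v j)) * F g c x1 y1 else 0)
        * (∑ x2, ∑ y2,
          (if (fun j : {j : Fin n // j < q} => x2 j.1) = v ∧ x2 q = c1 ∧ y2 q = c2
             then (∏ j : {j : Fin n // q ≤ j}, p (u j, x2 j.1)) * K g c x2 y2 else 0)) := by
        refine Finset.sum_congr rfl fun x1 _ => ?_
        rw [Finset.sum_comm]
        refine Finset.sum_congr rfl fun y1 _ => ?_
        rw [Finset.mul_sum]
        exact Finset.sum_congr rfl fun x2 _ => (Finset.mul_sum _ _ _).symm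
    _ = _ := by
        rw [Finset.sum_mul]
        exact Finset.sum_congr rfl fun x1 _ => (Finset.sum_mul _ _ _).symm
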